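/- Let E, G, B, O, F be points of the Euclidean plane EuclideanSpace ℝ (Fin 2) with B ≠ O, such that B lies between G and O (Wbtw ℝ G B O) and O lies between B and F (Wbtw ℝ B O F), and suppose dist E B = dist E O. Then dist G B = dist O F if and only if dist E G = dist E F. -/

import Mathlib

/-- The equivalence between the neusis condition BG = OF of Philo's method and the
condition EF = EG of Heron's method for two mean proportionals. -/
theorem philo_heron_equiv (E G B O F : EuclideanSpace ℝ (Fin 2)) (hBO : B ≠ O)
    (h1 : Wbtw ℝ G B O) (h2 : Wbtw ℝ B O F) (h3 : dist E B = dist E O) :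
    dist G B = dist O F ↔ dist E G = dist E F := by
  have hu : O - B ≠ 0 := sub_ne_zero.mpr (Ne.symm hBO)
  have hr1 : SameRay ℝ (B - G) (O - B) := by simpa using h1.sameRay_vsub
  have hr2 : SameRay ℝ (O - B) (F - O) := by simpa using h2.sameRay_vsub
  obtain ⟨s, hs, hsG⟩ := hr1.exists_nonneg_right hu
  obtain ⟨t, ht, htF⟩ := hr2.exists_nonneg_left hu
  set u := O - B with hu'
  set v := E - B with hv'
  have hEO : E - O = v - u := by rw [hv', hu']; abel
  have hnu : (0:ℝ) < ‖u‖ := norm_pos_iff.mpr hu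
  clear_value u v
  -- key inner product identity from h3
  have hinner : 2 * (inner ℝ v u : ℝ) = ‖u‖ ^ 2 := by
    have h3' : ‖v‖ ^ 2 = ‖v - u‖ ^ 2 := by
      rw [dist_eq_norm, dist_eq_norm, hEO, ← hv'] at h3
      rw [h3]
    have h4 := norm_sub_sq_real v u
    nlinarith [h3', h4]
  have hGB : dist G B = s * ‖u‖ := by
    rw [dist_comm, dist_eq_norm, hsG, norm_smul, Real.norm_of_nonneg hs]
  have hF : F = t • u + O := sub_eq_iff_eq_add.mp htF.symm
  have hOF : dist O F = t * ‖u‖ := by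
    have hOF' : O - F = (-t) • u := by rw [hF, neg_smul]; abel
    rw [dist_eq_norm, hOF', norm_smul, norm_neg, Real.norm_of_nonneg ht]
  have hEG : dist E G ^ 2 = ‖v‖ ^ 2 + (s + s ^ 2) * ‖u‖ ^ 2 := by
    have hEGv : E - G = v + s • u := by rw [hv', ← hsG]; abel
    rw [dist_eq_norm, hEGv, norm_add_sq_real, real_inner_smul_right, norm_smul,
      Real.norm_of_nonneg hs]
    linear_combination s * hinner
  have hEF : dist E F ^ 2 = ‖v‖ ^ 2 + (t + t ^ 2) * ‖u‖ ^ 2 := by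
    have hEFv : E - F = (v - u) - t • u := by rw [hF, hv', hu']; abel
    rw [dist_eq_norm, hEFv, norm_sub_sq_real, real_inner_smul_right, norm_smul,
      Real.norm_of_nonneg ht, inner_sub_left, real_inner_self_eq_norm_sq,
      norm_sub_sq_real]
    linear_combination (-1 - t) * hinner
  constructor
  · intro h
    have hst : s = t := by
      rw [hGB, hOF] at h
      exact mul_right_cancel₀ (ne_of_gt hnu) h
    have hsq : dist E G ^ 2 = dist E F ^ 2 := by rw [hEG, hEF, hst]
    exact (sq_eq_sq₀ dist_nonneg dist_nonneg).mp hsq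
  · intro h
    have hsq : dist E G ^ 2 = dist E F ^ 2 := by rw [h]
    rw [hEG, hEF] at hsq
    have hcanc : s + s ^ 2 = t + t ^ 2 :=
      mul_right_cancel₀ (pow_ne_zero 2 (ne_of_gt hnu)) (by linarith [hsq])
    have hfac : (s - t) * (1 + s + t) = 0 := by linear_combination hcanc
    rcases mul_eq_zero.mp hfac with h' | h'
    · rw [hGB, hOF]
      have : s = t := by linarith
      rw [this]
    · exfalso; linarith
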